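/- arXiv:1208.4695 — 2 statements merged into one kernel-verified Lean document; each statement's English description precedes it below -/
import Mathlib

section
/- Let k be a field of characteristic 0. For every integer N ≥ 2, the explicitly defined maps θ, ω_N, K_N form a homotopy retract of Ω∨ onto C: θ and ω_N are chain maps, θ∘ω_N = id_C, and id_{Ω∨} − ω_N∘θ = d∘K_N + K_N∘d. Moreover θ vanishes on the subspace Ω∨₍₂₎, and for all s ≥ 0 the image of ω_N − ω_{N+s} and the image of K_N − K_{N+s} are contained in Ω∨₍N₎. -/
open Finsupp TensorProduct

noncomputable section

variable (k : Type) [Field k] [CharZero k]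

/-- Underlying space of `Ω∨`: basis `α i ↔ Sum.inl i`, `β i ↔ Sum.inr i`. -/
abbrev Om : Type := (ℕ ⊕ ℕ) →₀ k

/-- the basis vector `α_i` of `Ω∨` (degree 0, dual of `t^i`) -/
def av (i : ℕ) : Om k := Finsupp.single (Sum.inl i) 1

/-- the basis vector `β_i` of `Ω∨` (degree 1, dual of `t^i dt`) -/
def bv (i : ℕ) : Om k := Finsupp.single (Sum.inr i) 1

/-- the differential of `Ω∨`: `d β_i = (i+1) α_{i+1}`, `d α_i = 0`. -/
def dOm : Om k →ₗ[k] Om k :=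
  Finsupp.lift (Om k) k (ℕ ⊕ ℕ) fun x =>
    match x with
    | Sum.inl _ => 0
    | Sum.inr i => ((i : k) + 1) • av k (i + 1)

/-- Underlying space of `C = C_•([0,1])`: basis `𝟎 ↔ 0`, `𝟏 ↔ 1`, `𝟎𝟏 ↔ 2`. -/
abbrev Cc : Type := Fin 3 →₀ k

/-- the degree-0 basis vector `𝟎` of `C` -/
def c0 : Cc k := Finsupp.single 0 1
/-- the degree-0 basis vector `𝟏` of `C` -/
def c1 : Cc k := Finsupp.single 1 1
/-- the degree-1 basis vector `𝟎𝟏` of `C` -/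
def c01 : Cc k := Finsupp.single 2 1

/-- the differential of `C`: `d 𝟎𝟏 = 𝟏 - 𝟎`, `d 𝟎 = d 𝟏 = 0`. -/
def dC : Cc k →ₗ[k] Cc k :=
  Finsupp.lift (Cc k) k (Fin 3) fun x => if x = 2 then c1 k - c0 k else 0

/-- the projection `θ : Ω∨ → C`. -/
def θm : Om k →ₗ[k] Cc k :=
  Finsupp.lift (Cc k) k (ℕ ⊕ ℕ) fun x =>
    match x with
    | Sum.inl 0 => c0 k
    | Sum.inl 1 => c1 k - c0 k
    | Sum.inl _ => 0
    | Sum.inr 0 => c01 k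
    | Sum.inr _ => 0

/-- the inclusion `ω_N : C → Ω∨`. -/
def ωm (N : ℕ) : Cc k →ₗ[k] Om k :=
  Finsupp.lift (Om k) k (Fin 3) fun x =>
    if x = 0 then av k 0
    else if x = 1 then ∑ p ∈ Finset.range N, av k p
    else ∑ p ∈ Finset.range (N - 1), ((p : k) + 1)⁻¹ • bv k p

/-- the homotopy `K_N : Ω∨ → Ω∨`. -/
def Km (N : ℕ) : Om k →ₗ[k] Om k :=
  Finsupp.lift (Om k) k (ℕ ⊕ ℕ) fun x =>
    match x with
    | Sum.inl 0 => 0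
    | Sum.inl 1 => - ∑ j ∈ Finset.Ico 1 (N - 1), ((j : k) + 1)⁻¹ • bv k j
    | Sum.inl (i + 2) => ((i : k) + 2)⁻¹ • bv k (i + 1)
    | Sum.inr _ => 0

/-- the filtration `Ω∨_(N)`, spanned by the `α_j` with `j ≥ N` and the `β_j` with `j ≥ N - 1`. -/
def Filt (N : ℕ) : Submodule k (Om k) :=
  Submodule.span k
    ({x | ∃ j, N ≤ j ∧ x = av k j} ∪ {x | ∃ j, N ≤ j + 1 ∧ x = bv k j})

end


section Aux
set_option linter.unusedSectionVars false
variable (k : Type) [Field k] [CharZero k]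

@[simp] lemma dOm_av (i : ℕ) : dOm k (av k i) = 0 := by
  simp [dOm, av, Finsupp.lift_apply]

@[simp] lemma dOm_bv (i : ℕ) : dOm k (bv k i) = ((i : k) + 1) • av k (i + 1) := by
  simp [dOm, bv, Finsupp.lift_apply]

@[simp] lemma dC_c0 : dC k (c0 k) = 0 := by simp [dC, c0, Finsupp.lift_apply]
@[simp] lemma dC_c1 : dC k (c1 k) = 0 := by simp [dC, c1, Finsupp.lift_apply]
@[simp] lemma dC_c01 : dC k (c01 k) = c1 k - c0 k := by simp [dC, c01, Finsupp.lift_apply]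

@[simp] lemma θ_av0 : θm k (av k 0) = c0 k := by simp [θm, av, Finsupp.lift_apply]
@[simp] lemma θ_av1 : θm k (av k 1) = c1 k - c0 k := by simp [θm, av, Finsupp.lift_apply]
@[simp] lemma θ_av2 (i : ℕ) : θm k (av k (i + 2)) = 0 := by simp [θm, av, Finsupp.lift_apply]
@[simp] lemma θ_bv0 : θm k (bv k 0) = c01 k := by simp [θm, bv, Finsupp.lift_apply]
@[simp] lemma θ_bv1 (i : ℕ) : θm k (bv k (i + 1)) = 0 := by simp [θm, bv, Finsupp.lift_apply]

@[simp] lemma ω_c0 (N : ℕ) : ωm k N (c0 k) = av k 0 := by simp [ωm, c0, Finsupp.lift_apply]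
@[simp] lemma ω_c1 (N : ℕ) : ωm k N (c1 k) = ∑ p ∈ Finset.range N, av k p := by
  simp [ωm, c1, Finsupp.lift_apply]
@[simp] lemma ω_c01 (N : ℕ) :
    ωm k N (c01 k) = ∑ p ∈ Finset.range (N - 1), ((p : k) + 1)⁻¹ • bv k p := by
  simp [ωm, c01, Finsupp.lift_apply]

@[simp] lemma K_av0 (N : ℕ) : Km k N (av k 0) = 0 := by simp [Km, av, Finsupp.lift_apply]
@[simp] lemma K_av1 (N : ℕ) :
    Km k N (av k 1) = - ∑ j ∈ Finset.Ico 1 (N - 1), ((j : k) + 1)⁻¹ • bv k j := by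
  simp [Km, av, Finsupp.lift_apply]
@[simp] lemma K_av2 (N i : ℕ) : Km k N (av k (i + 2)) = ((i : k) + 2)⁻¹ • bv k (i + 1) := by
  simp [Km, av, Finsupp.lift_apply]
@[simp] lemma K_bv (N i : ℕ) : Km k N (bv k i) = 0 := by simp [Km, bv, Finsupp.lift_apply]

@[simp] lemma single_inl (i : ℕ) : (Finsupp.single (Sum.inl i) (1:k) : Om k) = av k i := rfl
@[simp] lemma single_inr (i : ℕ) : (Finsupp.single (Sum.inr i) (1:k) : Om k) = bv k i := rfl

lemma av_mem_Filt (N j : ℕ) (h : N ≤ j) : av k j ∈ Filt k N :=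
  Submodule.subset_span (Or.inl ⟨j, h, rfl⟩)

lemma bv_mem_Filt (N j : ℕ) (h : N ≤ j + 1) : bv k j ∈ Filt k N :=
  Submodule.subset_span (Or.inr ⟨j, h, rfl⟩)

end Aux

/-- For every `N ≥ 2`, the maps `θ`, `ω_N`, `K_N` form a homotopy
retract of `Ω∨` onto `C`: `θ` and `ω_N` are chain maps, `θ ∘ ω_N = id`,
`id - ω_N ∘ θ = d ∘ K_N + K_N ∘ d`; moreover `θ` vanishes on `Ω∨_(2)`, and for every
`s ≥ 0` the images of `ω_N - ω_{N+s}` and of `K_N - K_{N+s}` lie in `Ω∨_(N)`. -/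
theorem statement0 (k : Type) [Field k] [CharZero k] (N : ℕ) (hN : 2 ≤ N) :
    (dC k ∘ₗ θm k = θm k ∘ₗ dOm k) ∧
    (dOm k ∘ₗ ωm k N = ωm k N ∘ₗ dC k) ∧
    (θm k ∘ₗ ωm k N = LinearMap.id) ∧
    (LinearMap.id - ωm k N ∘ₗ θm k = dOm k ∘ₗ Km k N + Km k N ∘ₗ dOm k) ∧
    (∀ x ∈ Filt k 2, θm k x = 0) ∧
    (∀ s : ℕ, ∀ c : Cc k, (ωm k N - ωm k (N + s)) c ∈ Filt k N) ∧
    (∀ s : ℕ, ∀ x : Om k, (Km k N - Km k (N + s)) x ∈ Filt k N) := by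
  obtain ⟨m, rfl⟩ : ∃ m, N = m + 2 := ⟨N - 2, by omega⟩
  have hcast : ∀ x : ℕ, (((x:k)+1)⁻¹ * ((x:k)+1)) • av k (x+1) = av k (x+1) := fun x => by
    rw [inv_mul_cancel₀ (Nat.cast_add_one_ne_zero x), one_smul]
  refine ⟨?_, ?_, ?_, ?_, ?_, ?_, ?_⟩
  · -- θ chain map
    refine Finsupp.lhom_ext' fun x => LinearMap.ext_ring ?_
    rcases x with (_ | _ | i) | (_ | i) <;> simp [smul_sub]
  · -- ω chain map
    refine Finsupp.lhom_ext' fun x => LinearMap.ext_ring ?_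
    fin_cases x
    · show dOm k (ωm k (m+2) (c0 k)) = ωm k (m+2) (dC k (c0 k)); simp
    · show dOm k (ωm k (m+2) (c1 k)) = ωm k (m+2) (dC k (c1 k)); simp [map_sum]
    · show dOm k (ωm k (m+2) (c01 k)) = ωm k (m+2) (dC k (c01 k))
      simp [map_sum, map_sub, smul_smul, hcast]
      rw [Finset.sum_range_succ' _ (m+1)]
      simp
  · -- θ ∘ ω = id
    refine Finsupp.lhom_ext' fun x => LinearMap.ext_ring ?_
    fin_cases x
    · show θm k (ωm k (m+2) (c0 k)) = c0 k; simp
    · show θm k (ωm k (m+2) (c1 k)) = c1 k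
      simp only [ω_c1, map_sum]
      rw [Finset.range_eq_Ico, Finset.sum_eq_sum_Ico_succ_bot (by omega : 0 < m+2),
        Finset.sum_eq_sum_Ico_succ_bot (by omega : 1 < m+2)]
      rw [Finset.sum_eq_zero (fun p hp => by
        obtain ⟨i, rfl⟩ : ∃ i, p = i + 2 := ⟨p - 2, by have := (Finset.mem_Ico.mp hp).1; omega⟩
        exact θ_av2 k i)]
      simp
    · show θm k (ωm k (m+2) (c01 k)) = c01 k
      simp only [ω_c01, map_sum, LinearMap.map_smul, show m+2-1 = m+1 from rfl]
      rw [Finset.range_eq_Ico, Finset.sum_eq_sum_Ico_succ_bot (by omega : 0 < m+1)]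
      rw [Finset.sum_eq_zero (fun p hp => by
        obtain ⟨i, rfl⟩ : ∃ i, p = i + 1 := ⟨p - 1, by have := (Finset.mem_Ico.mp hp).1; omega⟩
        rw [θ_bv1, smul_zero])]
      simp
  · -- homotopy
    refine Finsupp.lhom_ext' fun x => LinearMap.ext_ring ?_
    rcases x with (_ | _ | i) | (_ | i)
    · simp
    · simp [map_sub, sub_smul, smul_smul]
      simp only [hcast]
      rw [Finset.range_eq_Ico, Finset.sum_eq_sum_Ico_succ_bot (by omega : 0 < m+2),
        Finset.sum_eq_sum_Ico_succ_bot (by omega : 1 < m+2),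
        Finset.sum_Ico_eq_sum_range, Finset.sum_Ico_eq_sum_range]
      simp only [Nat.add_sub_cancel, show m+2-2 = m by omega, show m+1-1 = m from rfl]
      rw [Finset.sum_congr rfl (fun x _ => show av k (1+x+1) = av k (2+x) by ring_nf)]
      abel
    · have h2 : ((i:k)+1+1) ≠ 0 := by
        intro h
        exact Nat.cast_add_one_ne_zero (R := k) (i+1) (by push_cast; linear_combination h)
      simp [smul_smul]
      rw [show ((i:k)+2)⁻¹ * ((i:k)+1+1) = 1 by
        rw [show ((i:k)+1+1) = (i:k)+2 by ring]; exact inv_mul_cancel₀ (by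
          rw [show ((i:k)+2) = (i:k)+1+1 by ring]; exact h2), one_smul]
    · simp [map_sub]
      rw [Finset.range_eq_Ico, Finset.sum_eq_sum_Ico_succ_bot (by omega)]
      simp
    · have h2 : ((i:k)+1+1) ≠ 0 := by
        intro h
        exact Nat.cast_add_one_ne_zero (R := k) (i+1) (by push_cast; linear_combination h)
      simp [smul_smul]
      rw [show ((i:k)+1+1) * ((i:k)+2)⁻¹ = 1 by
        rw [show ((i:k)+1+1) = (i:k)+2 by ring]; exact mul_inv_cancel₀ (by
          rw [show ((i:k)+2) = (i:k)+1+1 by ring]; exact h2), one_smul]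
  · -- θ vanishes on Filt 2
    intro x hx
    refine Submodule.span_induction ?_ (map_zero _) (fun a b _ _ ha hb => by
      rw [map_add, ha, hb, add_zero]) (fun c a _ ha => by rw [map_smul, ha, smul_zero]) hx
    rintro y (⟨j, hj, rfl⟩ | ⟨j, hj, rfl⟩)
    · obtain ⟨i, rfl⟩ : ∃ i, j = i + 2 := ⟨j - 2, by omega⟩
      simp
    · obtain ⟨i, rfl⟩ : ∃ i, j = i + 1 := ⟨j - 1, by omega⟩
      simp
  · -- ω_N - ω_{N+s}
    intro s c
    induction c using Finsupp.induction_linear with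
    | zero => simp
    | add f g hf hg => rw [map_add]; exact add_mem hf hg
    | single a b =>
      rw [show (Finsupp.single a b : Cc k) = b • Finsupp.single a 1 by
        rw [Finsupp.smul_single, smul_eq_mul, mul_one], map_smul]
      refine Submodule.smul_mem _ _ ?_
      fin_cases a
      · show (ωm k (m+2) - ωm k (m+2+s)) (c0 k) ∈ _
        simp
      · show (ωm k (m+2) - ωm k (m+2+s)) (c1 k) ∈ _
        simp only [LinearMap.sub_apply, ω_c1, Finset.range_eq_Ico]
        rw [← Finset.sum_Ico_consecutive _ (Nat.zero_le (m+2)) (by omega : m+2 ≤ m+2+s)]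
        rw [sub_add_eq_sub_sub, sub_self, zero_sub]
        refine neg_mem (Submodule.sum_mem _ fun p hp => ?_)
        exact av_mem_Filt k _ _ (Finset.mem_Ico.mp hp).1
      · show (ωm k (m+2) - ωm k (m+2+s)) (c01 k) ∈ _
        simp only [LinearMap.sub_apply, ω_c01, Finset.range_eq_Ico,
          show m+2-1 = m+1 from rfl, show m+2+s-1 = m+1+s by omega]
        rw [← Finset.sum_Ico_consecutive _ (Nat.zero_le (m+1)) (by omega : m+1 ≤ m+1+s)]
        rw [sub_add_eq_sub_sub, sub_self, zero_sub]
        refine neg_mem (Submodule.sum_mem _ fun p hp => ?_)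
        refine Submodule.smul_mem _ _ (bv_mem_Filt k _ _ ?_)
        have := (Finset.mem_Ico.mp hp).1; omega
  · -- K_N - K_{N+s}
    intro s x
    induction x using Finsupp.induction_linear with
    | zero => simp
    | add f g hf hg => rw [map_add]; exact add_mem hf hg
    | single a b =>
      rw [show (Finsupp.single a b : Om k) = b • Finsupp.single a 1 by
        rw [Finsupp.smul_single, smul_eq_mul, mul_one], map_smul]
      refine Submodule.smul_mem _ _ ?_
      rcases a with (_ | _ | i) | i
      · simp
      · show (Km k (m+2)) (av k 1) - (Km k (m+2+s)) (av k 1) ∈ _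
        simp only [K_av1, show m+2-1 = m+1 from rfl, show m+2+s-1 = m+1+s by omega]
        rw [← Finset.sum_Ico_consecutive _ (by omega : 1 ≤ m+1) (by omega : m+1 ≤ m+1+s)]
        rw [show ∀ A B : Om k, -A - -(A + B) = B from fun A B => by abel]
        refine Submodule.sum_mem _ fun p hp => ?_
        refine Submodule.smul_mem _ _ (bv_mem_Filt k _ _ ?_)
        have := (Finset.mem_Ico.mp hp).1; omega
      · show (Km k (m+2)) (av k (i+2)) - (Km k (m+2+s)) (av k (i+2)) ∈ _
        simp
      · simp
end

section
/- Let k be a field of characteristic 0. For all integers k ≥ 1 and N > k, the composite θ^{⊗k}∘δ^{(k−1)} : Ω∨ → C^{⊗k} vanishes on the subspace Ω∨₍N₎. (Equivalently: if fewer than N iterated comultiplications are applied to an element of Ω∨₍N₎, then in every resulting elementary tensor at least one factor lies in Ω∨₍₂₎, on which θ vanishes.) -/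
open Finsupp TensorProduct

noncomputable section
variable (k : Type) [Field k] [CharZero k]

/-- the comultiplication `δ` on `Ω∨`:
`δ α_i = ∑_{a+b=i} α_a ⊗ α_b`, `δ β_i = ∑_{a+b=i} (β_a ⊗ α_b + α_a ⊗ β_b)`. -/
def δm : Om k →ₗ[k] Om k ⊗[k] Om k :=
  Finsupp.lift (Om k ⊗[k] Om k) k (ℕ ⊕ ℕ) fun x =>
    match x with
    | Sum.inl i => ∑ ab ∈ Finset.HasAntidiagonal.antidiagonal i, av k ab.1 ⊗ₜ[k] av k ab.2
    | Sum.inr i => ∑ ab ∈ Finset.HasAntidiagonal.antidiagonal i,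
        (bv k ab.1 ⊗ₜ[k] av k ab.2 + av k ab.1 ⊗ₜ[k] bv k ab.2)

/-- the counit `ε` on `Ω∨`: `ε α_0 = 1`, `ε α_i = 0` for `i ≥ 1`, `ε β_i = 0`. -/
def εm : Om k →ₗ[k] k :=
  Finsupp.lift k k (ℕ ⊕ ℕ) fun x =>
    match x with
    | Sum.inl 0 => 1
    | _ => 0

end

noncomputable section
variable (k : Type) [Field k] [CharZero k]

/-- `OmPow n` is the (n+1)-fold tensor power `(Ω∨)^{⊗(n+1)}`. -/
def OmPow : ℕ → ModuleCat k
  | 0 => ModuleCat.of k (Om k)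
  | n + 1 => ModuleCat.of k (Om k ⊗[k] (OmPow n))

/-- `CcPow n` is the (n+1)-fold tensor power `C^{⊗(n+1)}`. -/
def CcPow : ℕ → ModuleCat k
  | 0 => ModuleCat.of k (Cc k)
  | n + 1 => ModuleCat.of k (Cc k ⊗[k] (CcPow n))

/-- `δiter n : Ω∨ → (Ω∨)^{⊗(n+1)}` is the `n`-fold iterated comultiplication
`δ^{(n)}`, defined recursively by `δ^{(0)} = id` and `δ^{(n+1)} = (id ⊗ δ^{(n)}) ∘ δ`. -/
def δiter : (n : ℕ) → (Om k →ₗ[k] OmPow k n)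
  | 0 => LinearMap.id
  | n + 1 => (TensorProduct.map LinearMap.id (δiter n)) ∘ₗ δm k

/-- `θpow n : (Ω∨)^{⊗(n+1)} → C^{⊗(n+1)}` is the (n+1)-fold tensor power `θ^{⊗(n+1)}`. -/
def θpow : (n : ℕ) → (OmPow k n →ₗ[k] CcPow k n)
  | 0 => θm k
  | n + 1 => TensorProduct.map (θm k) (θpow n)

/-- the pure tensor `x ⊗ x ⊗ ⋯ ⊗ x` (`n+1` factors) in `C^{⊗(n+1)}`. -/
def cpow (x : Cc k) : (n : ℕ) → CcPow k n
  | 0 => x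
  | n + 1 => x ⊗ₜ[k] cpow x n

/-- the pure tensor `f 0 ⊗ f 1 ⊗ ⋯ ⊗ f n` in `C^{⊗(n+1)}`. -/
def tensorOf (f : ℕ → Cc k) : (n : ℕ) → CcPow k n
  | 0 => f 0
  | n + 1 => f 0 ⊗ₜ[k] tensorOf (fun i => f (i + 1)) n

end

section Aux
variable (k : Type) [Field k] [CharZero k]

lemma lift_single' {M : Type} [AddCommMonoid M] [Module k M] (f : (ℕ ⊕ ℕ) → M) (x : ℕ ⊕ ℕ) :
    Finsupp.lift M k (ℕ ⊕ ℕ) f (Finsupp.single x (1 : k)) = f x := by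
  simp [Finsupp.lift_apply, Finsupp.sum_single_index]

lemma θm_av2 (a : ℕ) : θm k (av k (a + 2)) = 0 := lift_single' k _ _

lemma θm_bv1 (a : ℕ) : θm k (bv k (a + 1)) = 0 := lift_single' k _ _

lemma δm_av (i : ℕ) : δm k (av k i) =
    ∑ ab ∈ Finset.HasAntidiagonal.antidiagonal i, av k ab.1 ⊗ₜ[k] av k ab.2 := lift_single' k _ _

lemma δm_bv (i : ℕ) : δm k (bv k i) =
    ∑ ab ∈ Finset.HasAntidiagonal.antidiagonal i,
      (bv k ab.1 ⊗ₜ[k] av k ab.2 + av k ab.1 ⊗ₜ[k] bv k ab.2) := lift_single' k _ _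

lemma van : ∀ n, (∀ i, n + 2 ≤ i → θpow k n (δiter k n (av k i)) = 0) ∧
    (∀ i, n + 1 ≤ i → θpow k n (δiter k n (bv k i)) = 0) := by
  intro n
  induction n with
  | zero =>
    refine ⟨fun i hi => ?_, fun i hi => ?_⟩
    · obtain ⟨j, rfl⟩ : ∃ j, i = j + 2 := ⟨i - 2, by omega⟩
      exact θm_av2 k j
    · obtain ⟨j, rfl⟩ : ∃ j, i = j + 1 := ⟨i - 1, by omega⟩
      exact θm_bv1 k j
  | succ n ih =>
    refine ⟨fun i hi => ?_, fun i hi => ?_⟩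
    · simp only [δiter, θpow, LinearMap.comp_apply, δm_av, map_sum,
        TensorProduct.map_tmul, LinearMap.id_coe, id_eq]
      show TensorProduct.map (θm k) (θpow k n)
        (TensorProduct.map LinearMap.id (δiter k n) (δm k (av k i))) = 0
      rw [δm_av, map_sum, map_sum]
      refine Finset.sum_eq_zero ?_
      rintro ⟨a, b⟩ hab
      rw [Finset.HasAntidiagonal.mem_antidiagonal] at hab
      show TensorProduct.map (θm k) (θpow k n)
        (TensorProduct.map LinearMap.id (δiter k n) (av k a ⊗ₜ[k] av k b)) = 0
      rw [TensorProduct.map_tmul, TensorProduct.map_tmul, LinearMap.id_apply]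
      match a with
      | 0 => rw [ih.1 b (by omega)]; simp
      | 1 => rw [ih.1 b (by omega)]; simp
      | a + 2 => rw [θm_av2]; simp
    · simp only [δiter, θpow, LinearMap.comp_apply, δm_bv, map_sum, map_add,
        TensorProduct.map_tmul, LinearMap.id_coe, id_eq]
      show TensorProduct.map (θm k) (θpow k n)
        (TensorProduct.map LinearMap.id (δiter k n) (δm k (bv k i))) = 0
      rw [δm_bv, map_sum, map_sum]
      simp only [map_add]
      refine Finset.sum_eq_zero ?_
      rintro ⟨a, b⟩ hab
      rw [Finset.HasAntidiagonal.mem_antidiagonal] at hab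
      have h1 : θm k (bv k a) ⊗ₜ[k] θpow k n (δiter k n (av k b)) = 0 := by
        match a with
        | 0 => rw [ih.1 b (by omega)]; simp
        | a + 1 => rw [θm_bv1]; simp
      have h2 : θm k (av k a) ⊗ₜ[k] θpow k n (δiter k n (bv k b)) = 0 := by
        match a with
        | 0 => rw [ih.2 b (by omega)]; simp
        | 1 => rw [ih.2 b (by omega)]; simp
        | a + 2 => rw [θm_av2]; simp
      show TensorProduct.map (θm k) (θpow k n)
          (TensorProduct.map LinearMap.id (δiter k n) (bv k a ⊗ₜ[k] av k b)) +
        TensorProduct.map (θm k) (θpow k n)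
          (TensorProduct.map LinearMap.id (δiter k n) (av k a ⊗ₜ[k] bv k b)) = 0
      rw [TensorProduct.map_tmul, TensorProduct.map_tmul, TensorProduct.map_tmul,
        TensorProduct.map_tmul, LinearMap.id_apply, LinearMap.id_apply, h1, h2, add_zero]

end Aux

/-- For all `n ≥ 1` and `N > n`, the composite
`θ^{⊗n} ∘ δ^{(n-1)} : Ω∨ → C^{⊗n}` vanishes on the subspace `Ω∨_(N)`.
(Here the `n`-fold tensor power is `CcPow (n-1)` and `δ^{(n-1)} = δiter (n-1)`.) -/

theorem statement5 (k : Type) [Field k] [CharZero k] (n N : ℕ) (hn : 1 ≤ n) (hN : n < N) :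
    ∀ x ∈ Filt k N, θpow k (n - 1) (δiter k (n - 1) x) = 0 := by
  intro x hx
  induction hx using Submodule.span_induction with
  | mem x hx =>
    rcases hx with ⟨j, hj, rfl⟩ | ⟨j, hj, rfl⟩
    · exact (van k (n - 1)).1 j (by omega)
    · exact (van k (n - 1)).2 j (by omega)
  | zero => simp
  | add x y _ _ hx hy => rw [map_add, map_add, hx, hy, add_zero]
  | smul c x _ hx => rw [map_smul, map_smul, hx, smul_zero]
end
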